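/- Let G = (V⁺, V⁻; E) be a simple bipartite graph with |V⁺| > |V⁻| and nonpositive edge weights w : E → ℝ, and let G' = (V⁺, V⁻ ∪ D; E') with weights w' be obtained by adding a set D of |V⁺| − |V⁻| dummy vertices to V⁻, each joined to every vertex of V⁺ by an edge of weight 0. Let μ' be a minimum-weight perfect matching in (G', w'), let s ∈ V⁺, and let w̃' be new weights agreeing with w' on every edge not incident to s (in particular all dummy edges keep weight 0). If the auxiliary weighted graph (G'_{μ'}, w̃'_{μ'}) contains a negative cycle, then it contains a cycle of minimum weight that intersects at most one dummy vertex. -/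

import Mathlib

/-!  Common setup: weighted bipartite graphs `G = (V⁺, V⁻; E)` with `V⁺ = α`, `V⁻ = β`,
edges directed from `V⁺` to `V⁻`, auxiliary graphs of matchings, walks and cycles. -/

variable {α β : Type*}

/-- Directed adjacency of the auxiliary graph `G_μ`: non-matching edges go from `V⁺` to `V⁻`,
matching edges are reversed. -/
def auxAdj (E μ : Finset (α × β)) : α ⊕ β → α ⊕ β → Prop
  | Sum.inl u, Sum.inr v => (u, v) ∈ E ∧ (u, v) ∉ μ
  | Sum.inr v, Sum.inl u => (u, v) ∈ μ
  | _, _ => False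

/-- The auxiliary weight `w_μ`, as a function on pairs of vertices. -/
def auxW (w : α × β → ℝ) : α ⊕ β → α ⊕ β → ℝ
  | Sum.inl u, Sum.inr v => w (u, v)
  | Sum.inr v, Sum.inl u => - w (u, v)
  | _, _ => 0

/-- Weight of a walk, given by its list of vertices. -/
def walkWeight {V : Type*} (W : V → V → ℝ) (l : List V) : ℝ :=
  ((l.zip l.tail).map fun p => W p.1 p.2).sum

/-- A (simple) directed path from `s` to `t`, given by its list of vertices. -/
def IsDiPath {V : Type*} (adj : V → V → Prop) (s t : V) (l : List V) : Prop :=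
  l.head? = some s ∧ l.getLast? = some t ∧ l.Chain' adj ∧ l.Nodup

/-- A (simple) directed cycle, given by the list of its vertices (the closing edge
from the last vertex back to the first is implicit). -/
def IsDiCycle {V : Type*} (adj : V → V → Prop) (l : List V) : Prop :=
  l ≠ [] ∧ l.Nodup ∧ (l ++ l.take 1).Chain' adj

/-- Total auxiliary weight of a directed cycle (including the closing edge). -/
def cycleWeight {V : Type*} (W : V → V → ℝ) (l : List V) : ℝ :=
  walkWeight W (l ++ l.take 1)

/-- The underlying undirected edge of a dart of the auxiliary graph. -/
def undEdge : (α ⊕ β) × (α ⊕ β) → Option (α × β)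
  | (Sum.inl u, Sum.inr v) => some (u, v)
  | (Sum.inr v, Sum.inl u) => some (u, v)
  | _ => none

/-- The set of underlying edges of `G` used by a walk in the auxiliary graph. -/
def usedEdges [DecidableEq α] [DecidableEq β] (l : List (α ⊕ β)) : Finset (α × β) :=
  ((l.zip l.tail).filterMap undEdge).toFinset

/-- An edge set is a matching if every vertex appears at most once. -/
def IsMatching (μ : Finset (α × β)) : Prop :=
  ∀ e ∈ μ, ∀ f ∈ μ, (e.1 = f.1 ∨ e.2 = f.2) → e = f

/-- A perfect matching: a matching contained in `E` covering every vertex. -/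
def IsPerfectMatching (E μ : Finset (α × β)) : Prop :=
  μ ⊆ E ∧ IsMatching μ ∧ (∀ u : α, ∃ v : β, (u, v) ∈ μ) ∧ (∀ v : β, ∃ u : α, (u, v) ∈ μ)

/-- The weight of a matching. -/
def matchingWeight (w : α × β → ℝ) (μ : Finset (α × β)) : ℝ := ∑ e ∈ μ, w e

/-- A minimum-weight perfect matching. -/
def IsMinPerfectMatching (E : Finset (α × β)) (w : α × β → ℝ) (μ : Finset (α × β)) : Prop :=
  IsPerfectMatching E μ ∧
    ∀ ν : Finset (α × β), IsPerfectMatching E ν → matchingWeight w μ ≤ matchingWeight w ν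

/-- `p` is a potential for `(G_μ, w_μ)`: all reduced weights are nonnegative. -/
def IsPotential (E μ : Finset (α × β)) (w : α × β → ℝ) (p : α ⊕ β → ℝ) : Prop :=
  ∀ x y : α ⊕ β, auxAdj E μ x y → auxW w x y + p x - p y ≥ 0

variable {γ : Type*}

/-- The edge set of the dummy extension `G'`: the original edges of `G` together with an edge
from every vertex of `V⁺` to every dummy vertex (the dummy vertices form the type `γ`). -/
def extE [Fintype α] [Fintype γ] [DecidableEq α] [DecidableEq β] [DecidableEq γ]
    (E : Finset (α × β)) : Finset (α × (β ⊕ γ)) :=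
  E.image (fun e => (e.1, Sum.inl e.2)) ∪
    Finset.univ.image (fun p : α × γ => (p.1, Sum.inr p.2))

/-- The weights of the dummy extension: original weights on original edges, `0` on dummy edges. -/
def extW (w : α × β → ℝ) : α × (β ⊕ γ) → ℝ
  | (u, Sum.inl v) => w (u, v)
  | (_, Sum.inr _) => 0

namespace MNC

open List

variable {V : Type*}

/-- The cyclic darts of a list. -/
def cdarts (l : List V) : List (V × V) := l.zip (l.rotate 1)

theorem chain'_iff_zip {adj : V → V → Prop} :
    ∀ {l : List V}, l.Chain' adj ↔ ∀ p ∈ l.zip l.tail, adj p.1 p.2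
  | [] => by simp; exact List.isChain_nil
  | [a] => by simp; exact List.isChain_singleton _
  | a :: b :: t => by
    rw [List.Chain', List.isChain_cons_cons, show List.IsChain adj (b :: t) ↔ _ from chain'_iff_zip (l := b :: t)]
    simp only [List.tail_cons, List.zip_cons_cons, List.mem_cons, forall_eq_or_imp]

theorem rotate_one_cons (a : V) (t : List V) : (a :: t).rotate 1 = t ++ [a] := by
  simp [List.rotate_cons_succ]

theorem cdarts_cons (a : V) (t : List V) : cdarts (a :: t) = (a :: t).zip (t ++ [a]) := by
  rw [cdarts, rotate_one_cons]

theorem close_zip (l : List V) (h : l ≠ []) :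
    (l ++ l.take 1).zip (l ++ l.take 1).tail = cdarts l := by
  cases l with
  | nil => exact absurd rfl h
  | cons a t =>
    rw [cdarts_cons]
    have h1 : ((a :: t) ++ [a]).tail = t ++ [a] := by simp
    have h2 : (a :: t).length = (t ++ [a]).length := by simp
    calc ((a :: t) ++ (a :: t).take 1).zip ((a :: t) ++ (a :: t).take 1).tail
        = ((a :: t) ++ [a]).zip ((t ++ [a]) ++ []) := by simp
      _ = (a :: t).zip (t ++ [a]) ++ ([a].zip []) := List.zip_append h2
      _ = (a :: t).zip (t ++ [a]) := by simp

theorem cycleWeight_eq_cdarts (W : V → V → ℝ) (l : List V) (h : l ≠ []) :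
    cycleWeight W l = ((cdarts l).map fun p => W p.1 p.2).sum := by
  rw [cycleWeight, walkWeight, close_zip l h]

theorem isDiCycle_iff (adj : V → V → Prop) (l : List V) :
    IsDiCycle adj l ↔ l ≠ [] ∧ l.Nodup ∧ ∀ p ∈ cdarts l, adj p.1 p.2 := by
  constructor
  · rintro ⟨h1, h2, h3⟩
    refine ⟨h1, h2, ?_⟩
    rw [← close_zip l h1]
    exact chain'_iff_zip.1 h3
  · rintro ⟨h1, h2, h3⟩
    refine ⟨h1, h2, ?_⟩
    rw [chain'_iff_zip, close_zip l h1]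
    exact h3

theorem zip_rotate {A B : Type*} (l₁ : List A) (l₂ : List B) (h : l₁.length = l₂.length) (n : ℕ) :
    (l₁.rotate n).zip (l₂.rotate n) = (l₁.zip l₂).rotate n := by
  rcases eq_or_ne l₁ [] with rfl | h1
  · have : l₂ = [] := by
      cases l₂ with
      | nil => rfl
      | cons a t => simp at h
    simp [this]
  rw [List.rotate_eq_drop_append_take_mod (l := l₁),
    List.rotate_eq_drop_append_take_mod (l := l₂),
    List.rotate_eq_drop_append_take_mod (l := l₁.zip l₂)]
  have hk : n % l₂.length = n % l₁.length := by rw [h]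
  have hkz : n % (l₁.zip l₂).length = n % l₁.length := by
    rw [List.length_zip, ← h, Nat.min_self]
  rw [hk, hkz]
  have hlen : (l₁.drop (n % l₁.length)).length = (l₂.drop (n % l₁.length)).length := by
    simp [h]
  rw [List.zip_append hlen]
  simp [List.zip_eq_zipWith, List.drop_zipWith, List.take_zipWith]

theorem cdarts_rotate (l : List V) (n : ℕ) : cdarts (l.rotate n) = (cdarts l).rotate n := by
  rw [cdarts, cdarts, List.rotate_rotate, Nat.add_comm, ← List.rotate_rotate,
    zip_rotate _ _ (by rw [List.length_rotate])]

theorem isDiCycle_rotate {adj : V → V → Prop} {l : List V} (h : IsDiCycle adj l) (n : ℕ) :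
    IsDiCycle adj (l.rotate n) := by
  rw [isDiCycle_iff] at h ⊢
  obtain ⟨h1, h2, h3⟩ := h
  refine ⟨by simpa using h1, List.nodup_rotate.2 h2, ?_⟩
  intro p hp
  rw [cdarts_rotate] at hp
  exact h3 p (List.mem_rotate.1 hp)

theorem cycleWeight_rotate (W : V → V → ℝ) {l : List V} (h : l ≠ []) (n : ℕ) :
    cycleWeight W (l.rotate n) = cycleWeight W l := by
  rw [cycleWeight_eq_cdarts W _ (by simpa using h), cycleWeight_eq_cdarts W l h,
    cdarts_rotate, List.map_rotate]
  exact (((cdarts l).map fun p => W p.1 p.2).rotate_perm n).sum_eq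

theorem cdarts_map_fst (l : List V) : (cdarts l).map Prod.fst = l :=
  List.map_fst_zip (le_of_eq (by rw [List.length_rotate]))

theorem cdarts_map_snd (l : List V) : (cdarts l).map Prod.snd = l.rotate 1 :=
  List.map_snd_zip (le_of_eq (by rw [List.length_rotate]))

theorem mem_fst_cdarts {x : V} {l : List V} (hx : x ∈ l) : ∃ y, (x, y) ∈ cdarts l := by
  conv at hx => rw [← cdarts_map_fst l]
  obtain ⟨p, hp, hpx⟩ := List.mem_map.1 hx
  exact ⟨p.2, by rw [← hpx]; simpa using hp⟩

theorem mem_snd_cdarts {x : V} {l : List V} (hx : x ∈ l) : ∃ y, (y, x) ∈ cdarts l := by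
  have hx' : x ∈ (cdarts l).map Prod.snd := by rw [cdarts_map_snd]; exact List.mem_rotate.2 hx
  obtain ⟨p, hp, hpx⟩ := List.mem_map.1 hx'
  exact ⟨p.1, by rw [← hpx]; simpa using hp⟩

theorem fst_mem_of_mem_cdarts {p : V × V} {l : List V} (hp : p ∈ cdarts l) : p.1 ∈ l :=
  (List.of_mem_zip hp).1

theorem snd_mem_of_mem_cdarts {p : V × V} {l : List V} (hp : p ∈ cdarts l) : p.2 ∈ l :=
  List.mem_rotate.1 (List.of_mem_zip hp).2

theorem cdarts_inj_fst {l : List V} (h : l.Nodup) {p q : V × V}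
    (hp : p ∈ cdarts l) (hq : q ∈ cdarts l) (hfst : p.1 = q.1) : p = q := by
  have hnd : ((cdarts l).map Prod.fst).Nodup := by rwa [cdarts_map_fst]
  exact List.inj_on_of_nodup_map hnd hp hq hfst

theorem cdarts_inj_snd {l : List V} (h : l.Nodup) {p q : V × V}
    (hp : p ∈ cdarts l) (hq : q ∈ cdarts l) (hsnd : p.2 = q.2) : p = q := by
  have hnd : ((cdarts l).map Prod.snd).Nodup := by
    rw [cdarts_map_snd]; exact List.nodup_rotate.2 h
  exact List.inj_on_of_nodup_map hnd hp hq hsnd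

theorem cdarts_nodup {l : List V} (h : l.Nodup) : (cdarts l).Nodup := by
  have : ((cdarts l).map Prod.fst).Nodup := by rwa [cdarts_map_fst]
  exact this.of_map _

/-! ### walk weights -/

@[simp] theorem walkWeight_nil (W : V → V → ℝ) : walkWeight W [] = 0 := by simp [walkWeight]

@[simp] theorem walkWeight_single (W : V → V → ℝ) (a : V) : walkWeight W [a] = 0 := by
  simp [walkWeight]

theorem walkWeight_cons_cons (W : V → V → ℝ) (a b : V) (t : List V) :
    walkWeight W (a :: b :: t) = W a b + walkWeight W (b :: t) := by
  simp [walkWeight]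

theorem walkWeight_cons (W : V → V → ℝ) (a : V) {l : List V} (h : l ≠ []) :
    walkWeight W (a :: l) = W a (l.head h) + walkWeight W l := by
  cases l with
  | nil => exact absurd rfl h
  | cons b t => rw [walkWeight_cons_cons]; rfl

theorem walkWeight_append (W : V → V → ℝ) :
    ∀ (l₁ : List V) {l₂ : List V} (h₁ : l₁ ≠ []) (h₂ : l₂ ≠ []),
      walkWeight W (l₁ ++ l₂) =
        walkWeight W l₁ + W (l₁.getLast h₁) (l₂.head h₂) + walkWeight W l₂
  | [], _, h₁, _ => absurd rfl h₁
  | [a], l₂, _, h₂ => by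
    rw [List.singleton_append, walkWeight_cons W a h₂]
    simp
  | a :: b :: t, l₂, _, h₂ => by
    have ih := walkWeight_append W (b :: t) (List.cons_ne_nil _ _) h₂
    have h3 : walkWeight W (a :: b :: t ++ l₂) = W a b + walkWeight W ((b :: t) ++ l₂) := by
      rw [List.cons_append]
      exact walkWeight_cons_cons W a b (t ++ l₂)
    rw [h3, ih, walkWeight_cons_cons W a b t, List.getLast_cons (List.cons_ne_nil _ _)]
    ring

theorem walkWeight_concat (W : V → V → ℝ) (l : List V) (h : l ≠ []) (x : V) :
    walkWeight W (l ++ [x]) = walkWeight W l + W (l.getLast h) x := by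
  rw [walkWeight_append W l h (List.cons_ne_nil x [])]
  simp

theorem cycleWeight_cons (W : V → V → ℝ) (a : V) (t : List V) :
    cycleWeight W (a :: t) = walkWeight W ((a :: t) ++ [a]) := by
  rw [cycleWeight]; rfl

end MNC
namespace MNC

section Matching

variable {α β : Type*} [DecidableEq α] [DecidableEq β]

/-- Forward dart to its edge. -/
def fwdE : (α ⊕ β) × (α ⊕ β) → Option (α × β)
  | (Sum.inl u, Sum.inr v) => some (u, v)
  | _ => none

/-- Backward dart to its edge. -/
def bwdE : (α ⊕ β) × (α ⊕ β) → Option (α × β)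
  | (Sum.inr v, Sum.inl u) => some (u, v)
  | _ => none

theorem fwdE_eq_some {p : (α ⊕ β) × (α ⊕ β)} {e : α × β} :
    fwdE p = some e ↔ p = (Sum.inl e.1, Sum.inr e.2) := by
  rcases p with ⟨x, y⟩
  cases x <;> cases y <;> simp [fwdE, Prod.ext_iff] <;> aesop

theorem bwdE_eq_some {p : (α ⊕ β) × (α ⊕ β)} {e : α × β} :
    bwdE p = some e ↔ p = (Sum.inr e.2, Sum.inl e.1) := by
  rcases p with ⟨x, y⟩
  cases x <;> cases y <;> simp [bwdE, Prod.ext_iff] <;> aesop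

variable {E μ : Finset (α × β)}

theorem adj_from_inl {u : α} {y : α ⊕ β} (h : auxAdj E μ (Sum.inl u) y) :
    ∃ v, y = Sum.inr v ∧ (u, v) ∈ E ∧ (u, v) ∉ μ := by
  cases y with
  | inl u' => exact absurd h (by simp [auxAdj])
  | inr v => exact ⟨v, rfl, h⟩

theorem adj_from_inr {v : β} {y : α ⊕ β} (h : auxAdj E μ (Sum.inr v) y) :
    ∃ u, y = Sum.inl u ∧ (u, v) ∈ μ := by
  cases y with
  | inl u => exact ⟨u, rfl, h⟩
  | inr v' => exact absurd h (by simp [auxAdj])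

theorem adj_to_inl {u : α} {x : α ⊕ β} (h : auxAdj E μ x (Sum.inl u)) :
    ∃ v, x = Sum.inr v ∧ (u, v) ∈ μ := by
  cases x with
  | inl u' => exact absurd h (by simp [auxAdj])
  | inr v => exact ⟨v, rfl, h⟩

theorem adj_to_inr {v : β} {x : α ⊕ β} (h : auxAdj E μ x (Sum.inr v)) :
    ∃ u, x = Sum.inl u ∧ (u, v) ∈ E ∧ (u, v) ∉ μ := by
  cases x with
  | inl u => exact ⟨u, rfl, h⟩
  | inr v' => exact absurd h (by simp [auxAdj])

theorem darts_sum (E μ : Finset (α × β)) (w : α × β → ℝ) :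
    ∀ (dl : List ((α ⊕ β) × (α ⊕ β))), (∀ p ∈ dl, auxAdj E μ p.1 p.2) →
      ((dl.map fun p => auxW w p.1 p.2).sum)
        = ((dl.filterMap fwdE).map w).sum - ((dl.filterMap bwdE).map w).sum
  | [], _ => by simp
  | p :: t, h => by
    have ht := darts_sum E μ w t (fun q hq => h q (List.mem_cons_of_mem _ hq))
    have hp := h p List.mem_cons_self
    rcases p with ⟨x, y⟩
    cases x with
    | inl u =>
      cases y with
      | inl u' => exact False.elim hp
      | inr v =>
        have h1 : fwdE (α := α) (β := β) (Sum.inl u, Sum.inr v) = some (u, v) := rfl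
        have h2 : bwdE (α := α) (β := β) (Sum.inl u, Sum.inr v) = none := rfl
        simp only [List.map_cons, List.sum_cons, List.filterMap_cons, h1, h2]
        rw [ht]
        show auxW w (Sum.inl u) (Sum.inr v) + _ = _
        simp only [auxW]
        ring
    | inr v =>
      cases y with
      | inr v' => exact False.elim hp
      | inl u =>
        have h1 : fwdE (α := α) (β := β) (Sum.inr v, Sum.inl u) = none := rfl
        have h2 : bwdE (α := α) (β := β) (Sum.inr v, Sum.inl u) = some (u, v) := rfl
        simp only [List.map_cons, List.sum_cons, List.filterMap_cons, h1, h2]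
        rw [ht]
        show auxW w (Sum.inr v) (Sum.inl u) + _ = _
        simp only [auxW]
        ring

/-- **No negative cycles** in the auxiliary graph of a minimum-weight perfect matching. -/
theorem cycle_nonneg (E : Finset (α × β)) (w : α × β → ℝ) (μ : Finset (α × β))
    (hμ : IsMinPerfectMatching E w μ) (l : List (α ⊕ β))
    (hl : IsDiCycle (auxAdj E μ) l) : 0 ≤ cycleWeight (auxW w) l := by
  obtain ⟨hne, hnd, hadj⟩ := (isDiCycle_iff _ l).1 hl
  obtain ⟨⟨hsubE, hmat, hcovl, hcovr⟩, hopt⟩ := hμ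
  classical
  set dl := cdarts l with hdl
  set Fs := (dl.filterMap fwdE).toFinset with hFs
  set Ms := (dl.filterMap bwdE).toFinset with hMs
  have hF : ∀ u v, (u, v) ∈ Fs ↔ (Sum.inl u, Sum.inr v) ∈ dl := by
    intro u v
    rw [hFs, List.mem_toFinset, List.mem_filterMap]
    constructor
    · rintro ⟨p, hp, hpe⟩
      rw [fwdE_eq_some.1 hpe] at hp; exact hp
    · intro h; exact ⟨_, h, rfl⟩
  have hM : ∀ u v, (u, v) ∈ Ms ↔ (Sum.inr v, Sum.inl u) ∈ dl := by
    intro u v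
    rw [hMs, List.mem_toFinset, List.mem_filterMap]
    constructor
    · rintro ⟨p, hp, hpe⟩
      rw [bwdE_eq_some.1 hpe] at hp; exact hp
    · intro h; exact ⟨_, h, rfl⟩
  have hFprop : ∀ e ∈ Fs, e ∈ E ∧ e ∉ μ := by
    rintro ⟨u, v⟩ he
    exact hadj _ ((hF u v).1 he)
  have hMsub : Ms ⊆ μ := by
    rintro ⟨u, v⟩ he
    exact hadj _ ((hM u v).1 he)
  -- each vertex of the cycle is covered by a backward dart
  have hinl_mem : ∀ u : α, Sum.inl u ∈ l → ∃ v, (u, v) ∈ μ ∧ (u, v) ∈ Ms := by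
    intro u hu
    obtain ⟨y, hy⟩ := mem_snd_cdarts hu
    obtain ⟨v, rfl, hv⟩ := adj_to_inl (hadj _ hy)
    exact ⟨v, hv, (hM u v).2 hy⟩
  have hinr_mem : ∀ v : β, Sum.inr v ∈ l → ∃ u, (u, v) ∈ μ ∧ (u, v) ∈ Ms := by
    intro v hv
    obtain ⟨y, hy⟩ := mem_fst_cdarts hv
    obtain ⟨u, rfl, hu⟩ := adj_from_inr (hadj _ hy)
    exact ⟨u, hu, (hM u v).2 hy⟩
  set ν := (μ \ Ms) ∪ Fs with hν
  have mem_ν : ∀ e, e ∈ ν ↔ (e ∈ μ ∧ e ∉ Ms) ∨ e ∈ Fs := by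
    intro e; rw [hν, Finset.mem_union, Finset.mem_sdiff]
  -- if a matched edge has an endpoint on the cycle, it is in Ms
  have hMs_of_l : ∀ u v, (u, v) ∈ μ → (Sum.inl u ∈ l ∨ Sum.inr v ∈ l) → (u, v) ∈ Ms := by
    rintro u v huv (hul | hvl)
    · obtain ⟨v', hv', hd⟩ := hinl_mem u hul
      have : (u, v') = (u, v) := hmat _ hv' _ huv (Or.inl rfl)
      rwa [← this]
    · obtain ⟨u', hu', hd⟩ := hinr_mem v hvl
      have : (u', v) = (u, v) := hmat _ hu' _ huv (Or.inr rfl)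
      rwa [← this]
  -- ν is a perfect matching
  have hνE : ν ⊆ E := by
    intro e he
    rcases (mem_ν e).1 he with ⟨h1, _⟩ | h1
    · exact hsubE h1
    · exact (hFprop e h1).1
  have hcov1 : ∀ u : α, ∃ v, (u, v) ∈ ν := by
    intro u
    rcases Classical.em ((Sum.inl u : α ⊕ β) ∈ l) with hu | hu
    · obtain ⟨y, hy⟩ := mem_fst_cdarts hu
      obtain ⟨v, rfl, hv1, hv2⟩ := adj_from_inl (hadj _ hy)
      exact ⟨v, (mem_ν _).2 (Or.inr ((hF u v).2 hy))⟩
    · obtain ⟨v, hv⟩ := hcovl u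
      refine ⟨v, (mem_ν _).2 (Or.inl ⟨hv, fun hMsm => ?_⟩)⟩
      exact hu (snd_mem_of_mem_cdarts ((hM u v).1 hMsm))
  have hcov2 : ∀ v : β, ∃ u, (u, v) ∈ ν := by
    intro v
    rcases Classical.em ((Sum.inr v : α ⊕ β) ∈ l) with hv | hv
    · obtain ⟨y, hy⟩ := mem_snd_cdarts hv
      obtain ⟨u, rfl, hu1, hu2⟩ := adj_to_inr (hadj _ hy)
      exact ⟨u, (mem_ν _).2 (Or.inr ((hF u v).2 hy))⟩
    · obtain ⟨u, hu⟩ := hcovr v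
      refine ⟨u, (mem_ν _).2 (Or.inl ⟨hu, fun hMsm => ?_⟩)⟩
      exact hv (fst_mem_of_mem_cdarts ((hM u v).1 hMsm))
  have hkey : ∀ e ∈ μ, e ∉ Ms → ∀ f ∈ Fs, (e.1 = f.1 ∨ e.2 = f.2) → False := by
    rintro ⟨u, v⟩ he heM ⟨u', v'⟩ hf hef
    have hfd : (Sum.inl u', Sum.inr v') ∈ dl := (hF u' v').1 hf
    rcases hef with h1 | h1
    · dsimp at h1; subst h1
      exact heM (hMs_of_l u v he (Or.inl (fst_mem_of_mem_cdarts hfd)))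
    · dsimp at h1; subst h1
      exact heM (hMs_of_l u v he (Or.inr (snd_mem_of_mem_cdarts hfd)))
  have hmatν : IsMatching ν := by
    rintro e he f hf hef
    rcases (mem_ν e).1 he with ⟨he1, he2⟩ | he1 <;>
      rcases (mem_ν f).1 hf with ⟨hf1, hf2⟩ | hf1
    · exact hmat e he1 f hf1 hef
    · exact (hkey e he1 he2 f hf1 hef).elim
    · exact (hkey f hf1 hf2 e he1 (Or.imp Eq.symm Eq.symm hef)).elim
    · rcases e with ⟨u, v⟩; rcases f with ⟨u', v'⟩
      have hed : (Sum.inl u, Sum.inr v) ∈ dl := (hF u v).1 he1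
      have hfd : (Sum.inl u', Sum.inr v') ∈ dl := (hF u' v').1 hf1
      rcases hef with h1 | h1
      · dsimp at h1; subst h1
        have := cdarts_inj_fst hnd hed hfd rfl
        simpa [Prod.ext_iff] using this
      · dsimp at h1; subst h1
        have := cdarts_inj_snd hnd hed hfd rfl
        simpa [Prod.ext_iff] using this
  -- weights
  have hFnd : (dl.filterMap fwdE).Nodup :=
    (cdarts_nodup hnd).filterMap (by
      intro a a' b hb hb'
      rw [Option.mem_def] at hb hb'
      rw [fwdE_eq_some.1 hb, fwdE_eq_some.1 hb'])
  have hMnd : (dl.filterMap bwdE).Nodup :=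
    (cdarts_nodup hnd).filterMap (by
      intro a a' b hb hb'
      rw [Option.mem_def] at hb hb'
      rw [bwdE_eq_some.1 hb, bwdE_eq_some.1 hb'])
  have hdisj : Disjoint (μ \ Ms) Fs := by
    rw [Finset.disjoint_right]
    intro e heF heμ
    exact (hFprop e heF).2 (Finset.mem_sdiff.1 heμ).1
  have hwν : matchingWeight w ν = matchingWeight w μ
      - ((dl.filterMap bwdE).map w).sum + ((dl.filterMap fwdE).map w).sum := by
    rw [hν, matchingWeight, matchingWeight, Finset.sum_union hdisj,
      Finset.sum_sdiff_eq_sub hMsub, hFs, hMs,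
      List.sum_toFinset _ hFnd, List.sum_toFinset _ hMnd]
  have hcw : cycleWeight (auxW w) l
      = ((dl.filterMap fwdE).map w).sum - ((dl.filterMap bwdE).map w).sum := by
    rw [cycleWeight_eq_cdarts _ _ hne]
    exact darts_sum E μ w dl hadj
  have hle := hopt ν ⟨hνE, hmatν, hcov1, hcov2⟩
  linarith

end Matching

end MNC
namespace MNC

open List

section Key

variable {α β : Type*} [DecidableEq α] [DecidableEq β]

theorem cycleWeight_congr_of_avoid (E μ : Finset (α × β)) (w tw : α × β → ℝ) (s : α)
    (hsub : μ ⊆ E) (htw : ∀ e ∈ E, e.1 ≠ s → tw e = w e)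
    (l : List (α ⊕ β)) (hl : IsDiCycle (auxAdj E μ) l)
    (hs : (Sum.inl s : α ⊕ β) ∉ l) :
    cycleWeight (auxW tw) l = cycleWeight (auxW w) l := by
  obtain ⟨hne, hnd, hadj⟩ := (isDiCycle_iff _ l).1 hl
  rw [cycleWeight_eq_cdarts _ _ hne, cycleWeight_eq_cdarts _ _ hne]
  congr 1
  apply List.map_congr_left
  intro p hp
  have h1 : p.1 ∈ l := fst_mem_of_mem_cdarts hp
  have h2 : p.2 ∈ l := snd_mem_of_mem_cdarts hp
  have ha := hadj p hp
  rcases p with ⟨x, y⟩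
  cases x with
  | inl c =>
    obtain ⟨v, rfl, hE1, -⟩ := adj_from_inl ha
    have hcs : c ≠ s := fun h => hs (h ▸ h1)
    show tw (c, v) = w (c, v)
    exact htw _ hE1 hcs
  | inr v =>
    obtain ⟨c, rfl, hm⟩ := adj_from_inr ha
    have hcs : c ≠ s := fun h => hs (h ▸ h2)
    show -tw (c, v) = -w (c, v)
    rw [htw _ (hsub hm) hcs]

theorem key_no_two (E : Finset (α × β)) (w tw : α × β → ℝ) (μ : Finset (α × β)) (s : α)
    (hμ : IsMinPerfectMatching E w μ)
    (htw : ∀ e ∈ E, e.1 ≠ s → tw e = w e)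
    (b₁ b₂ : β)
    (hfree₁ : ∀ x : α, (x, b₁) ∈ E)
    (hfree₂ : ∀ x : α, (x, b₂) ∈ E)
    (hzero₁ : ∀ x : α, tw (x, b₁) = 0)
    (hzero₂ : ∀ x : α, tw (x, b₂) = 0)
    (P Q : List (α ⊕ β))
    (hC : IsDiCycle (auxAdj E μ) (Sum.inr b₁ :: (P ++ Sum.inr b₂ :: Q)))
    (hminW : ∀ C', IsDiCycle (auxAdj E μ) C' →
      cycleWeight (auxW tw) (Sum.inr b₁ :: (P ++ Sum.inr b₂ :: Q)) ≤ cycleWeight (auxW tw) C')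
    (hminL : ∀ C', IsDiCycle (auxAdj E μ) C' →
      cycleWeight (auxW tw) C' = cycleWeight (auxW tw) (Sum.inr b₁ :: (P ++ Sum.inr b₂ :: Q)) →
      (Sum.inr b₁ :: (P ++ Sum.inr b₂ :: Q)).length ≤ C'.length)
    (hneg : cycleWeight (auxW tw) (Sum.inr b₁ :: (P ++ Sum.inr b₂ :: Q)) < 0)
    (hsP : (Sum.inl s : α ⊕ β) ∉ P) : False := by
  classical
  have hmat := hμ.1.2.1
  set C := Sum.inr b₁ :: (P ++ Sum.inr b₂ :: Q) with hCdef
  obtain ⟨hCne, hCnd, hCch⟩ := hC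
  -- split the cyclic chain
  have hlist : C ++ C.take 1 = (Sum.inr b₁ :: P) ++ (Sum.inr b₂ :: (Q ++ [Sum.inr b₁])) := by
    rw [hCdef]; simp
  rw [hlist, List.Chain', List.isChain_append] at hCch
  obtain ⟨hch1, hch2', hlink1⟩ := hCch
  have hlist2 : Sum.inr b₂ :: (Q ++ [Sum.inr b₁]) = (Sum.inr b₂ :: Q) ++ [Sum.inr b₁] := by simp
  rw [hlist2, List.isChain_append] at hch2'
  obtain ⟨hch2, -, hlink2⟩ := hch2'
  -- the two "last" vertices
  have hadj1 : auxAdj E μ ((Sum.inr b₁ :: P).getLast (List.cons_ne_nil _ _)) (Sum.inr b₂) := by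
    apply hlink1
    · rw [List.getLast?_eq_getLast (List.cons_ne_nil _ _)]; rfl
    · simp
  have hadj2 : auxAdj E μ ((Sum.inr b₂ :: Q).getLast (List.cons_ne_nil _ _)) (Sum.inr b₁) := by
    apply hlink2
    · rw [List.getLast?_eq_getLast (List.cons_ne_nil _ _)]; rfl
    · simp
  obtain ⟨a', hu'eq, hE1, hnμ1⟩ := adj_to_inr hadj1
  obtain ⟨a, hueq, hE2, hnμ2⟩ := adj_to_inr hadj2
  have hPne : P ≠ [] := by rintro rfl; simp at hu'eq
  have hQne : Q ≠ [] := by rintro rfl; simp at hueq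
  have hPlast : P.getLast hPne = Sum.inl a' := by rw [← List.getLast_cons hPne]; exact hu'eq
  have hQlast : Q.getLast hQne = Sum.inl a := by rw [← List.getLast_cons hQne]; exact hueq
  -- nodup of the pieces
  have hnd₁ : (Sum.inr b₁ :: P).Nodup :=
    ((List.sublist_append_left P (Sum.inr b₂ :: Q)).cons₂ (Sum.inr b₁)).nodup hCnd
  have hnd₂ : (Sum.inr b₂ :: Q).Nodup :=
    ((List.sublist_append_right P (Sum.inr b₂ :: Q)).cons (Sum.inr b₁)).nodup hCnd
  -- weight decomposition
  have e1 : auxW tw (Sum.inl a') (Sum.inr b₂) = 0 := hzero₂ a'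
  have e2 : auxW tw (Sum.inl a) (Sum.inr b₁) = 0 := hzero₁ a
  have e1' : auxW tw (Sum.inl a') (Sum.inr b₁) = 0 := hzero₁ a'
  have e2' : auxW tw (Sum.inl a) (Sum.inr b₂) = 0 := hzero₂ a
  have hWCsum : cycleWeight (auxW tw) C
      = walkWeight (auxW tw) (Sum.inr b₁ :: P) + walkWeight (auxW tw) (Sum.inr b₂ :: Q) := by
    have h2 := walkWeight_concat (auxW tw) (Sum.inr b₂ :: Q) (List.cons_ne_nil _ _) (Sum.inr b₁)
    rw [List.cons_append] at h2
    have h1 := walkWeight_append (auxW tw) (Sum.inr b₁ :: P)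
      (l₂ := Sum.inr b₂ :: (Q ++ [Sum.inr b₁])) (List.cons_ne_nil _ _) (List.cons_ne_nil _ _)
    rw [h2, List.head_cons] at h1
    rw [cycleWeight, hlist, h1, hu'eq, hueq, e1, e2]
    ring
  have hWC₂ : cycleWeight (auxW tw) (Sum.inr b₁ :: P) = walkWeight (auxW tw) (Sum.inr b₁ :: P) := by
    have h := walkWeight_concat (auxW tw) (Sum.inr b₁ :: P) (List.cons_ne_nil _ _) (Sum.inr b₁)
    rw [cycleWeight]
    show walkWeight (auxW tw) ((Sum.inr b₁ :: P) ++ [Sum.inr b₁]) = _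
    rw [h, hu'eq, e1']
    ring
  have hWC' : cycleWeight (auxW tw) (Sum.inr b₂ :: Q) = walkWeight (auxW tw) (Sum.inr b₂ :: Q) := by
    have h := walkWeight_concat (auxW tw) (Sum.inr b₂ :: Q) (List.cons_ne_nil _ _) (Sum.inr b₂)
    rw [cycleWeight]
    show walkWeight (auxW tw) ((Sum.inr b₂ :: Q) ++ [Sum.inr b₂]) = _
    rw [h, hueq, e2']
    ring
  -- candidate smaller cycles
  have hcycC₂ : (a', b₁) ∉ μ → IsDiCycle (auxAdj E μ) (Sum.inr b₁ :: P) := by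
    intro hb
    refine ⟨List.cons_ne_nil _ _, hnd₁, ?_⟩
    show ((Sum.inr b₁ :: P) ++ [Sum.inr b₁]).Chain' _
    rw [List.Chain', List.isChain_append]
    refine ⟨hch1, List.isChain_singleton _, ?_⟩
    intro x hx y hy
    have hx' : x = (Sum.inr b₁ :: P).getLast (List.cons_ne_nil _ _) := by
      rw [List.getLast?_eq_getLast (List.cons_ne_nil _ _)] at hx
      exact (Option.mem_some_iff.1 hx).symm
    have hy' : y = Sum.inr b₁ := (by simpa using hy : Sum.inr b₁ = y).symm
    rw [hx', hy', hu'eq]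
    exact ⟨hfree₁ a', hb⟩
  have hcycC' : (a, b₂) ∉ μ → IsDiCycle (auxAdj E μ) (Sum.inr b₂ :: Q) := by
    intro hb
    refine ⟨List.cons_ne_nil _ _, hnd₂, ?_⟩
    show ((Sum.inr b₂ :: Q) ++ [Sum.inr b₂]).Chain' _
    rw [List.Chain', List.isChain_append]
    refine ⟨hch2, List.isChain_singleton _, ?_⟩
    intro x hx y hy
    have hx' : x = (Sum.inr b₂ :: Q).getLast (List.cons_ne_nil _ _) := by
      rw [List.getLast?_eq_getLast (List.cons_ne_nil _ _)] at hx
      exact (Option.mem_some_iff.1 hx).symm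
    have hy' : y = Sum.inr b₂ := (by simpa using hy : Sum.inr b₂ = y).symm
    rw [hx', hy', hueq]
    exact ⟨hfree₂ a, hb⟩
  -- degenerate cases
  have hQdeg : (a, b₂) ∈ μ → Q = [Sum.inl a] := by
    intro hm
    rcases Q.eq_nil_or_concat with rfl | ⟨Q₀, x, hQx⟩
    · exact absurd rfl hQne
    · rw [List.concat_eq_append] at hQx
      subst hQx
      have hx : x = Sum.inl a := by
        rw [← hQlast, List.getLast_append_singleton]
      subst hx
      cases Q₀ with
      | nil => rfl
      | cons z Z =>
        exfalso
        have hch2'' : List.Chain' (auxAdj E μ) ((Sum.inr b₂ :: (z :: Z)) ++ [Sum.inl a]) := by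
          rw [List.cons_append]; exact hch2
        rw [List.Chain', List.isChain_append] at hch2''
        have hlk := hch2''.2.2 ((Sum.inr b₂ :: z :: Z).getLast (List.cons_ne_nil _ _))
          (by rw [List.getLast?_eq_getLast (List.cons_ne_nil _ _)]; rfl) (Sum.inl a) (by simp)
        obtain ⟨v, hveq, hvm⟩ := adj_to_inl hlk
        have hvb : v = b₂ := by
          have := hmat _ hvm _ hm (Or.inl rfl)
          exact congrArg Prod.snd this
        rw [hvb] at hveq
        have hmem : (Sum.inr b₂ : α ⊕ β) ∈ z :: Z := by
          rw [← hveq, List.getLast_cons (List.cons_ne_nil _ _)]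
          exact List.getLast_mem _
        have : (Sum.inr b₂ : α ⊕ β) ∉ (z :: Z) ++ [Sum.inl a] :=
          fun hc => (List.nodup_cons.1 hnd₂).1 hc
        exact this (List.mem_append_left _ hmem)
  have hPdeg : (a', b₁) ∈ μ → P = [Sum.inl a'] := by
    intro hm
    rcases P.eq_nil_or_concat with rfl | ⟨P₀, x, hPx⟩
    · exact absurd rfl hPne
    · rw [List.concat_eq_append] at hPx
      subst hPx
      have hx : x = Sum.inl a' := by
        rw [← hPlast, List.getLast_append_singleton]
      subst hx
      cases P₀ with
      | nil => rfl
      | cons z Z =>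
        exfalso
        have hch1'' : List.Chain' (auxAdj E μ) ((Sum.inr b₁ :: (z :: Z)) ++ [Sum.inl a']) := by
          rw [List.cons_append]; exact hch1
        rw [List.Chain', List.isChain_append] at hch1''
        have hlk := hch1''.2.2 ((Sum.inr b₁ :: z :: Z).getLast (List.cons_ne_nil _ _))
          (by rw [List.getLast?_eq_getLast (List.cons_ne_nil _ _)]; rfl) (Sum.inl a') (by simp)
        obtain ⟨v, hveq, hvm⟩ := adj_to_inl hlk
        have hvb : v = b₁ := by
          have := hmat _ hvm _ hm (Or.inl rfl)
          exact congrArg Prod.snd this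
        rw [hvb] at hveq
        have hmem : (Sum.inr b₁ : α ⊕ β) ∈ z :: Z := by
          rw [← hveq, List.getLast_cons (List.cons_ne_nil _ _)]
          exact List.getLast_mem _
        have : (Sum.inr b₁ : α ⊕ β) ∉ (z :: Z) ++ [Sum.inl a'] :=
          fun hc => (List.nodup_cons.1 hnd₁).1 hc
        exact this (List.mem_append_left _ hmem)
  have hB0 : (a, b₂) ∈ μ → walkWeight (auxW tw) (Sum.inr b₂ :: Q) = 0 := by
    intro hm
    rw [hQdeg hm, walkWeight_cons_cons, walkWeight_single]
    show -tw (a, b₂) + 0 = 0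
    rw [hzero₂ a]; ring
  have hA0 : (a', b₁) ∈ μ → walkWeight (auxW tw) (Sum.inr b₁ :: P) = 0 := by
    intro hm
    rw [hPdeg hm, walkWeight_cons_cons, walkWeight_single]
    show -tw (a', b₁) + 0 = 0
    rw [hzero₁ a']; ring
  -- main case analysis
  by_cases hb2 : (a, b₂) ∈ μ
  · by_cases hb1 : (a', b₁) ∈ μ
    · rw [hWCsum, hA0 hb1, hB0 hb2] at hneg
      linarith
    · have hcyc := hcycC₂ hb1
      have hwc2 : cycleWeight (auxW tw) (Sum.inr b₁ :: P) = cycleWeight (auxW tw) C := by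
        rw [hWC₂, hWCsum, hB0 hb2]; ring
      have hlen := hminL _ hcyc hwc2
      rw [hCdef] at hlen
      simp only [List.length_cons, List.length_append] at hlen
      omega
  · have hcyc := hcycC' hb2
    have hAnn : 0 ≤ walkWeight (auxW tw) (Sum.inr b₁ :: P) := by
      by_cases hb1 : (a', b₁) ∈ μ
      · rw [hA0 hb1]
      · have hcyc2 := hcycC₂ hb1
        have havoid : (Sum.inl s : α ⊕ β) ∉ (Sum.inr b₁ :: P) := by
          simp only [List.mem_cons]
          rintro (h | h)
          · exact absurd h (by simp)
          · exact hsP h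
        have h0 := cycle_nonneg E w μ hμ _ hcyc2
        rw [← cycleWeight_congr_of_avoid E μ w tw s hμ.1.1 htw _ hcyc2 havoid, hWC₂] at h0
        exact h0
    have hwle : cycleWeight (auxW tw) (Sum.inr b₂ :: Q) ≤ cycleWeight (auxW tw) C := by
      rw [hWC', hWCsum]; linarith
    have heq : cycleWeight (auxW tw) (Sum.inr b₂ :: Q) = cycleWeight (auxW tw) C :=
      le_antisymm hwle (hminW _ hcyc)
    have hlen := hminL _ hcyc heq
    rw [hCdef] at hlen
    simp only [List.length_cons, List.length_append] at hlen
    omega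

end Key

end MNC
namespace MNC

open List

variable {V : Type*}

theorem rotate_to_head {x : V} {l : List V} (h : x ∈ l) :
    ∃ n r, l.rotate n = x :: r := by
  obtain ⟨s, t, rfl⟩ := List.append_of_mem h
  refine ⟨s.length, t ++ s, ?_⟩
  rw [List.rotate_eq_drop_append_take (by simp), List.drop_left, List.take_left]
  rfl

theorem rotate_append (l₁ l₂ : List V) : (l₁ ++ l₂).rotate l₁.length = l₂ ++ l₁ := by
  rw [List.rotate_eq_drop_append_take (by simp), List.drop_left, List.take_left]

theorem cycles_finite [Fintype V] (adj : V → V → Prop) :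
    {l : List V | IsDiCycle adj l}.Finite := by
  apply (List.finite_length_le V (Fintype.card V)).subset
  intro l hl
  exact hl.2.1.length_le_card

variable {α β γ : Type*} [Fintype α] [Fintype γ] [DecidableEq α] [DecidableEq β] [DecidableEq γ]

theorem mem_extE_dummy (E : Finset (α × β)) (u : α) (d : γ) :
    (u, Sum.inr d) ∈ extE (γ := γ) E :=
  Finset.mem_union_right _ (Finset.mem_image.2 ⟨(u, d), Finset.mem_univ _, rfl⟩)

end MNC

/-- Let `|V⁺| > |V⁻|`, let `w` be nonpositive, let `(G', w')` be the dummy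
extension (with `|V⁺| − |V⁻|` dummy vertices, each joined to all of `V⁺` by weight-`0` edges),
let `μ'` be a minimum-weight perfect matching in `(G', w')`, `s ∈ V⁺`, and let `w̃'` agree with
`w'` on every edge not incident to `s` (all dummy edges keeping weight `0`). If
`(G'_{μ'}, w̃'_{μ'})` contains a negative cycle, then it contains a minimum-weight cycle
intersecting at most one dummy vertex. -/
theorem min_negative_cycle_few_dummies
    [Fintype α] [Fintype β] [Fintype γ] [DecidableEq α] [DecidableEq β] [DecidableEq γ]
    (E : Finset (α × β)) (w : α × β → ℝ) (μ' : Finset (α × (β ⊕ γ))) (s : α)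
    (tw : α × (β ⊕ γ) → ℝ)
    (hbal : Fintype.card β < Fintype.card α)
    (hγ : Fintype.card γ = Fintype.card α - Fintype.card β)
    (hw : ∀ e ∈ E, w e ≤ 0)
    (hμ' : IsMinPerfectMatching (extE (γ := γ) E) (extW w) μ')
    (htw : ∀ e ∈ extE (γ := γ) E, e.1 ≠ s → tw e = extW w e)
    (htwd : ∀ (u : α) (d : γ), tw (u, Sum.inr d) = 0)
    (hneg : ∃ C : List (α ⊕ (β ⊕ γ)),
      IsDiCycle (auxAdj (extE (γ := γ) E) μ') C ∧ cycleWeight (auxW tw) C < 0) :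
    ∃ C : List (α ⊕ (β ⊕ γ)), IsDiCycle (auxAdj (extE (γ := γ) E) μ') C ∧
      (∀ C' : List (α ⊕ (β ⊕ γ)), IsDiCycle (auxAdj (extE (γ := γ) E) μ') C' →
        cycleWeight (auxW tw) C ≤ cycleWeight (auxW tw) C') ∧
      ∀ d₁ d₂ : γ, Sum.inr (Sum.inr d₁) ∈ C → Sum.inr (Sum.inr d₂) ∈ C → d₁ = d₂ := by
  classical
  obtain ⟨C0, hC0, hC0neg⟩ := hneg
  obtain ⟨C₁, hC₁, hC₁min⟩ := Set.exists_min_image _ (cycleWeight (auxW tw))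
    (MNC.cycles_finite (auxAdj (extE (γ := γ) E) μ')) ⟨C0, hC0⟩
  obtain ⟨C, ⟨hCcyc, hCw⟩, hClen⟩ := Set.exists_min_image
    {l | IsDiCycle (auxAdj (extE (γ := γ) E) μ') l ∧
      cycleWeight (auxW tw) l = cycleWeight (auxW tw) C₁} List.length
    ((MNC.cycles_finite (auxAdj (extE (γ := γ) E) μ')).subset (fun l hl => hl.1))
    ⟨C₁, hC₁, rfl⟩
  have hminW : ∀ C', IsDiCycle (auxAdj (extE (γ := γ) E) μ') C' →
      cycleWeight (auxW tw) C ≤ cycleWeight (auxW tw) C' := by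
    intro C' h
    rw [hCw]
    exact hC₁min C' h
  have hminL : ∀ C', IsDiCycle (auxAdj (extE (γ := γ) E) μ') C' →
      cycleWeight (auxW tw) C' = cycleWeight (auxW tw) C → C.length ≤ C'.length := by
    intro C' h hw'
    exact hClen C' ⟨h, hw'.trans hCw⟩
  have hCneg : cycleWeight (auxW tw) C < 0 := lt_of_le_of_lt (hminW C0 hC0) hC0neg
  refine ⟨C, hCcyc, hminW, ?_⟩
  intro d₁ d₂ hd₁ hd₂
  by_contra hne'
  obtain ⟨n, r, hrot⟩ := MNC.rotate_to_head hd₁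
  have hrcyc : IsDiCycle (auxAdj (extE (γ := γ) E) μ') (Sum.inr (Sum.inr d₁) :: r) :=
    hrot ▸ MNC.isDiCycle_rotate hCcyc n
  have hrw : cycleWeight (auxW tw) (Sum.inr (Sum.inr d₁) :: r) = cycleWeight (auxW tw) C := by
    rw [← hrot]
    exact MNC.cycleWeight_rotate _ hCcyc.1 n
  have hrlen : (Sum.inr (Sum.inr d₁) :: r).length = C.length := by
    rw [← hrot, List.length_rotate]
  have hd₂r : (Sum.inr (Sum.inr d₂) : α ⊕ (β ⊕ γ)) ∈ r := by
    have hmem : (Sum.inr (Sum.inr d₂) : α ⊕ (β ⊕ γ)) ∈ Sum.inr (Sum.inr d₁) :: r := by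
      rw [← hrot]
      exact List.mem_rotate.2 hd₂
    rcases List.mem_cons.1 hmem with h | h
    · exfalso
      apply hne'
      have := (Sum.inr_injective (Sum.inr_injective h)).symm
      exact this
    · exact h
  obtain ⟨P, Q, hPQ⟩ := List.append_of_mem hd₂r
  rw [hPQ] at hrcyc hrw hrlen
  rcases Classical.em ((Sum.inl s : α ⊕ (β ⊕ γ)) ∈ P) with hsP | hsP
  · -- s is in P; rotate again so that the arc avoiding s comes first
    have hsQ : (Sum.inl s : α ⊕ (β ⊕ γ)) ∉ Q := by
      have hnd := hrcyc.2.1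
      rw [List.nodup_cons] at hnd
      have hdisj := (List.nodup_append.1 hnd.2).2.2
      intro hc
      exact hdisj _ hsP _ (List.mem_cons_of_mem _ hc) rfl
    have hlist : Sum.inr (Sum.inr d₁) :: (P ++ Sum.inr (Sum.inr d₂) :: Q)
        = (Sum.inr (Sum.inr d₁) :: P) ++ (Sum.inr (Sum.inr d₂) :: Q) := by simp
    have hrot2 := MNC.rotate_append (Sum.inr (Sum.inr d₁) :: P)
      ((Sum.inr (Sum.inr d₂) : α ⊕ (β ⊕ γ)) :: Q)
    have hcyc2 : IsDiCycle (auxAdj (extE (γ := γ) E) μ')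
        (Sum.inr (Sum.inr d₂) :: (Q ++ Sum.inr (Sum.inr d₁) :: P)) := by
      have hc' : IsDiCycle (auxAdj (extE (γ := γ) E) μ')
          ((Sum.inr (Sum.inr d₁) :: P) ++ (Sum.inr (Sum.inr d₂) :: Q)) := by
        rw [← hlist]; exact hrcyc
      have := MNC.isDiCycle_rotate hc' (Sum.inr (Sum.inr d₁) :: P).length
      rw [hrot2] at this
      simpa using this
    have hw2 : cycleWeight (auxW tw) (Sum.inr (Sum.inr d₂) :: (Q ++ Sum.inr (Sum.inr d₁) :: P))
        = cycleWeight (auxW tw) C := by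
      have := MNC.cycleWeight_rotate (auxW tw)
        (l := (Sum.inr (Sum.inr d₁) :: P) ++ (Sum.inr (Sum.inr d₂) :: Q)) (by simp)
        (Sum.inr (Sum.inr d₁) :: P).length
      rw [hrot2] at this
      rw [← hrw, hlist]
      simpa using this
    have hlen2 : (Sum.inr (Sum.inr d₂) :: (Q ++ Sum.inr (Sum.inr d₁) :: P)).length = C.length := by
      rw [← hrlen]
      simp
      omega
    exact MNC.key_no_two (extE (γ := γ) E) (extW w) tw μ' s hμ' htw
      (Sum.inr d₂) (Sum.inr d₁)
      (fun x => MNC.mem_extE_dummy E x d₂) (fun x => MNC.mem_extE_dummy E x d₁)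
      (fun x => htwd x d₂) (fun x => htwd x d₁)
      Q P hcyc2
      (fun C' h => by rw [hw2]; exact hminW C' h)
      (fun C' h hw' => by rw [hlen2]; exact hminL C' h (by rw [hw', hw2]))
      (by rw [hw2]; exact hCneg)
      hsQ
  · exact MNC.key_no_two (extE (γ := γ) E) (extW w) tw μ' s hμ' htw
      (Sum.inr d₁) (Sum.inr d₂)
      (fun x => MNC.mem_extE_dummy E x d₁) (fun x => MNC.mem_extE_dummy E x d₂)
      (fun x => htwd x d₁) (fun x => htwd x d₂)
      P Q hrcyc
      (fun C' h => by rw [hrw]; exact hminW C' h)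
      (fun C' h hw' => by rw [hrlen]; exact hminL C' h (by rw [hw', hrw]))
      (by rw [hrw]; exact hCneg)
      hsP
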